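/- Let I ⊆ ℝ be an interval and let (a,b,c) : I → ℝ³ be a differentiable solution of the gauged bracket Bach flow with a(t) > 0 and c(t) > 0 for all t ∈ I. Then for every t ∈ I the function t ↦ log(a(t)/c(t)) is differentiable with derivative equal to (c(t)² − a(t)²)·(a(t)² + b(t)² + c(t)²). -/

import Mathlib

/-- First component of the right-hand side `F` of the gauged bracket Bach flow. -/
noncomputable def Fa (a b c : ℝ) : ℝ :=
  -(a / 48) * (44*a^4 + 72*a^2*b^2 - 5*a^2*c^2 + 28*b^4 + 24*b^2*c^2 - 4*c^4)

/-- Second component of the right-hand side `F` of the gauged bracket Bach flow. -/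
noncomputable def Fb (a b c : ℝ) : ℝ :=
  -(b / 48) * (60*a^4 + 104*a^2*b^2 + 57*a^2*c^2 + 44*b^4 + 104*b^2*c^2 + 60*c^4)

/-- Third component of the right-hand side `F` of the gauged bracket Bach flow. -/
noncomputable def Fc (a b c : ℝ) : ℝ :=
  -(c / 48) * (-4*a^4 + 24*a^2*b^2 - 5*a^2*c^2 + 28*b^4 + 72*b^2*c^2 + 44*c^4)

/-- `(a,b,c) : ℝ → ℝ³` is a differentiable solution of the gauged bracket Bach
flow on the set `S ⊆ ℝ`. -/
def IsBachFlowSolution (a b c : ℝ → ℝ) (S : Set ℝ) : Prop :=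
  ∀ t ∈ S,
    HasDerivAt a (Fa (a t) (b t) (c t)) t ∧
    HasDerivAt b (Fb (a t) (b t) (c t)) t ∧
    HasDerivAt c (Fc (a t) (b t) (c t)) t

/-- along a solution of the gauged bracket Bach flow with `a, c > 0`,
the function `log(a/c)` is differentiable with derivative `(c² − a²)(a² + b² + c²)`. -/
theorem deriv_log_a_div_c (I : Set ℝ) (hI : I.OrdConnected) (a b c : ℝ → ℝ)
    (hsol : IsBachFlowSolution a b c I)
    (ha : ∀ t ∈ I, 0 < a t) (hc : ∀ t ∈ I, 0 < c t) :
    ∀ t ∈ I, HasDerivAt (fun s => Real.log (a s / c s))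
      ((c t ^ 2 - a t ^ 2) * (a t ^ 2 + b t ^ 2 + c t ^ 2)) t := by
  intro t ht
  obtain ⟨hA, hB, hC⟩ := hsol t ht
  have hat : a t ≠ 0 := (ha t ht).ne'
  have hct : c t ≠ 0 := (hc t ht).ne'
  have hdiv : HasDerivAt (fun s => a s / c s) _ t := hA.div hC hct
  have hlog : HasDerivAt (fun s => Real.log (a s / c s))
      ((Fa (a t) (b t) (c t) * c t - a t * Fc (a t) (b t) (c t)) / c t ^ 2 / (a t / c t)) t :=
    hdiv.log (div_ne_zero hat hct)
  convert hlog using 1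
  simp only [Fa, Fc]
  field_simp
  ring
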